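/- The space of irrational numbers is Menger at infinity but does not satisfy S_fin(𝓐,𝓐). -/

import Mathlib

open Set

/-- A space is Menger if for every sequence of open covers one can choose finite
subfamilies whose union is a cover. -/
def Menger (X : Type*) [TopologicalSpace X] : Prop :=
  ∀ U : ℕ → Set (Set X),
    (∀ n, (∀ s ∈ U n, IsOpen s) ∧ ⋃₀ U n = Set.univ) →
    ∃ V : ℕ → Set (Set X),
      (∀ n, V n ⊆ U n ∧ (V n).Finite) ∧ ⋃₀ (⋃ n, V n) = Set.univ

/-- A family of open sets is an almost covering if the complement of its union is compact. -/
def AlmostCover {X : Type*} [TopologicalSpace X] (U : Set (Set X)) : Prop :=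
  (∀ s ∈ U, IsOpen s) ∧ IsCompact (⋃₀ U)ᶜ

/-- The selection principle `S_fin(𝓐,𝓐)` for almost coverings. -/
def SfinAA (X : Type*) [TopologicalSpace X] : Prop :=
  ∀ U : ℕ → Set (Set X), (∀ n, AlmostCover (U n)) →
    ∃ V : ℕ → Set (Set X),
      (∀ n, V n ⊆ U n ∧ (V n).Finite) ∧ IsCompact (⋃₀ (⋃ n, V n))ᶜ

/-- A sequence of sets is a closed net at `K` if each member is closed and contains `K`,
and every open neighborhood of `K` contains some member. -/
def ClosedNetSeqAt {X : Type*} [TopologicalSpace X] (F : ℕ → Set X) (K : Set X) : Prop :=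
  (∀ n, IsClosed (F n) ∧ K ⊆ F n) ∧
    ∀ A : Set X, IsOpen A → K ⊆ A → ∃ n, F n ⊆ A

/-- A decreasing closed net at `K`. -/
def DecClosedNetSeqAt {X : Type*} [TopologicalSpace X] (F : ℕ → Set X) (K : Set X) : Prop :=
  (∀ n, F (n + 1) ⊆ F n) ∧ ClosedNetSeqAt F K

/-- A compact set `Q` has a countable (outer) neighborhood base in `X`. -/
def HasCountableOuterBase {X : Type*} [TopologicalSpace X] (Q : Set X) : Prop :=
  ∃ B : ℕ → Set X, (∀ k, IsOpen (B k) ∧ Q ⊆ B k) ∧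
    ∀ A : Set X, IsOpen A → Q ⊆ A → ∃ k, B k ⊆ A

/-- `X` is of countable type: every compact set is contained in a compact set having a
countable neighborhood base in `X`. -/
def CountableType (X : Type*) [TopologicalSpace X] : Prop :=
  ∀ K : Set X, IsCompact K → ∃ Q : Set X, IsCompact Q ∧ K ⊆ Q ∧ HasCountableOuterBase Q

/-- The remainder `βX \ X` of the Stone–Čech compactification. -/
abbrev StoneCechRemainder (X : Type*) [TopologicalSpace X] : Set (StoneCech X) :=
  (Set.range (stoneCechUnit : X → StoneCech X))ᶜ





/-- Menger from a sigma-compact decomposition of a subset. -/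
lemma menger_of_sigma {Y : Type*} [TopologicalSpace Y] {R : Set Y} (C : ℕ → Set Y)
    (hC : ∀ n, IsCompact (C n)) (hsub : ∀ n, C n ⊆ R) (hcov : R ⊆ ⋃ n, C n) :
    (∀ U : ℕ → Set (Set ↥R),
    (∀ n, (∀ s ∈ U n, IsOpen s) ∧ ⋃₀ U n = Set.univ) →
    ∃ V : ℕ → Set (Set ↥R),
      (∀ n, V n ⊆ U n ∧ (V n).Finite) ∧ ⋃₀ (⋃ n, V n) = Set.univ) := by
  intro U hU
  have hK : ∀ n, IsCompact ((Subtype.val : ↥R → Y) ⁻¹' C n) := by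
    intro n
    rw [Subtype.isCompact_iff]
    have : (Subtype.val '' ((Subtype.val : ↥R → Y) ⁻¹' C n)) = C n := by
      rw [Subtype.image_preimage_coe]
      exact inter_eq_self_of_subset_right (hsub n)
    rw [this]; exact hC n
  have hsel : ∀ n, ∃ V : Set (Set ↥R), V ⊆ U n ∧ V.Finite ∧
      (Subtype.val ⁻¹' C n) ⊆ ⋃₀ V := by
    intro n
    have hcover : (Subtype.val ⁻¹' C n) ⊆ ⋃ s : U n, (s : Set ↥R) := by
      intro x _
      have hx : x ∈ ⋃₀ U n := by rw [(hU n).2]; trivial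
      rcases hx with ⟨s, hs, hxs⟩
      exact mem_iUnion.2 ⟨⟨s, hs⟩, hxs⟩
    rcases (hK n).elim_finite_subcover (fun s : U n => (s : Set ↥R))
      (fun s => (hU n).1 s s.2) hcover with ⟨t, ht⟩
    refine ⟨Subtype.val '' (t : Set (U n)), Subtype.coe_image_subset _ _,
      t.finite_toSet.image _, ?_⟩
    intro x hx
    rcases mem_iUnion₂.1 (ht hx) with ⟨s, hst, hxs⟩
    exact ⟨s, ⟨s, hst, rfl⟩, hxs⟩
  choose V hVU hVfin hVcov using hsel
  refine ⟨V, fun n => ⟨hVU n, hVfin n⟩, ?_⟩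
  apply eq_univ_of_forall
  intro x
  have : (x : Y) ∈ ⋃ n, C n := hcov x.2
  rcases mem_iUnion.1 this with ⟨n, hn⟩
  rcases hVcov n hn with ⟨s, hs, hxs⟩
  exact ⟨s, mem_iUnion.2 ⟨n, hs⟩, hxs⟩

/-- Key: the preimage of the embedded copy under the Stone–Čech extension is exactly the
range of the unit. -/
lemma range_unit_eq_preimage {α Z : Type*} [TopologicalSpace α] [TopologicalSpace Z]
    [CompactSpace Z] [T2Space Z] {c : α → Z} (hc : Topology.IsEmbedding c) :
    range (stoneCechUnit : α → StoneCech α)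
      = stoneCechExtend hc.continuous ⁻¹' (range c) := by
  set φ := stoneCechExtend hc.continuous with hφ
  have hext : φ ∘ stoneCechUnit = c := stoneCechExtend_extends hc.continuous
  apply Subset.antisymm
  · rintro _ ⟨x, rfl⟩
    exact ⟨x, (congrFun hext x).symm⟩
  · rintro p ⟨x₀, hx₀⟩
    by_contra hp
    -- separate p from stoneCechUnit x₀
    have hne : p ≠ stoneCechUnit x₀ := fun h => hp (h ▸ ⟨x₀, rfl⟩)
    rcases t2_separation hne with ⟨U, V, hUo, hVo, hpU, hxV, hUV⟩
    have hx₀nc : stoneCechUnit x₀ ∉ closure U := by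
      intro h
      rcases mem_closure_iff.1 h V hVo hxV with ⟨z, hzV, hzU⟩
      exact (disjoint_left.1 hUV hzU) hzV
    set A := (stoneCechUnit : α → StoneCech α) ⁻¹' U with hA
    have hpc : p ∈ closure (U ∩ range (stoneCechUnit : α → StoneCech α)) :=
      hUo.inter_closure ⟨hpU, by rw [denseRange_stoneCechUnit.closure_range]; trivial⟩
    have himg : stoneCechUnit '' A = U ∩ range (stoneCechUnit : α → StoneCech α) := by
      rw [hA, image_preimage_eq_inter_range]
    have hφp : φ p ∈ closure (c '' A) := by
      have h1 : φ p ∈ φ '' closure (stoneCechUnit '' A) := by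
        exact mem_image_of_mem φ (by rw [himg]; exact hpc)
      have h2 : φ '' closure (stoneCechUnit '' A) ⊆ closure (φ '' (stoneCechUnit '' A)) :=
        image_closure_subset_closure_image (continuous_stoneCechExtend hc.continuous)
      have h3 : φ '' (stoneCechUnit '' A) = c '' A := by
        rw [← image_comp, hext]
      rw [← h3]; exact h2 h1
    have hx₀A : x₀ ∈ closure A := by
      have := hc.toIsInducing.closure_eq_preimage_closure_image A
      rw [this]
      exact mem_preimage.2 (by rw [hx₀]; exact hφp)
    have : stoneCechUnit x₀ ∈ closure U := by
      have h1 : stoneCechUnit x₀ ∈ stoneCechUnit '' closure A := mem_image_of_mem _ hx₀A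
      have h2 : stoneCechUnit '' closure A ⊆ closure (stoneCechUnit '' A) :=
        image_closure_subset_closure_image continuous_stoneCechUnit
      exact closure_mono (by rw [himg]; exact inter_subset_left) (h2 h1)
    exact hx₀nc this


abbrev Irr : Set ℝ := {x : ℝ | Irrational x}

noncomputable def cmap : ↥Irr → OnePoint ℝ := fun x => ((x : ℝ) : OnePoint ℝ)

lemma cmap_emb : Topology.IsEmbedding cmap :=
  OnePoint.isOpenEmbedding_coe.isEmbedding.comp Topology.IsEmbedding.subtypeVal

lemma range_cmap_gdelta : ∃ O : ℕ → Set (OnePoint ℝ),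
    (∀ n, IsOpen (O n)) ∧ range cmap = ⋂ n, O n := by
  obtain ⟨e, he⟩ := exists_surjective_nat ℚ
  refine ⟨fun n => range ((↑) : ℝ → OnePoint ℝ) ∩ {((e n : ℝ) : OnePoint ℝ)}ᶜ, ?_, ?_⟩
  · intro n
    exact OnePoint.isOpen_range_coe.inter isClosed_singleton.isOpen_compl
  · ext z
    simp only [mem_iInter, mem_inter_iff, mem_compl_iff, mem_singleton_iff]
    constructor
    · rintro ⟨x, rfl⟩
      refine fun n => ⟨⟨x, rfl⟩, fun h => ?_⟩
      have : ((e n : ℝ)) = (x : ℝ) := OnePoint.coe_injective h.symm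
      exact x.2 ⟨e n, this⟩
    · intro h
      obtain ⟨⟨r, rfl⟩, -⟩ := h 0
      have hr : Irrational r := by
        rintro ⟨q, hq⟩
        obtain ⟨n, rfl⟩ := he q
        exact (h n).2 (by rw [hq])
      exact ⟨⟨r, hr⟩, rfl⟩



noncomputable def cnt (k : ℕ) (x : ℝ) : ℕ :=
  ((Finset.range (k+1)).filter (fun j => Odd ⌊(2:ℝ)^(j+1) * x⌋)).card

lemma cnt_mono {k k' : ℕ} (h : k ≤ k') (x : ℝ) : cnt k x ≤ cnt k' x :=
  Finset.card_le_card (Finset.filter_subset_filter _ (Finset.range_subset_range.2 (by omega)))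

lemma irr_two_pow_mul {x : ℝ} (hx : Irrational x) (j : ℕ) : Irrational ((2:ℝ)^j * x) := by
  have h := hx.intCast_mul (m := 2^j) (by positivity)
  have : (((2:ℤ)^j : ℤ) : ℝ) = (2:ℝ)^j := by push_cast; ring
  rwa [this] at h

lemma floor_lt_self {z : ℝ} (hz : Irrational z) : (⌊z⌋ : ℝ) < z :=
  lt_of_le_of_ne (Int.floor_le z) (Ne.symm (hz.ne_int ⌊z⌋))

/-- local constancy of `cnt` at irrational points -/
lemma cnt_locally_const (k : ℕ) (x : ℝ) (hx : Irrational x) :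
    ∃ t : Set ℝ, IsOpen t ∧ x ∈ t ∧ ∀ y ∈ t, cnt k y = cnt k x := by
  refine ⟨⋂ j ∈ Finset.range (k+2),
      (fun y : ℝ => (2:ℝ)^j * y) ⁻¹' Ioo ((⌊(2:ℝ)^j * x⌋ : ℝ)) (⌊(2:ℝ)^j * x⌋ + 1), ?_, ?_, ?_⟩
  · exact isOpen_biInter_finset fun j _ =>
      isOpen_Ioo.preimage (continuous_const.mul continuous_id)
  · refine mem_iInter₂.2 fun j _ => ?_
    exact ⟨floor_lt_self (irr_two_pow_mul hx j), Int.lt_floor_add_one _⟩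
  · intro y hy
    have hfl : ∀ j ∈ Finset.range (k+2), ⌊(2:ℝ)^j * y⌋ = ⌊(2:ℝ)^j * x⌋ := by
      intro j hj
      have := mem_iInter₂.1 hy j hj
      exact Int.floor_eq_iff.2 ⟨le_of_lt this.1, this.2⟩
    unfold cnt
    congr 1
    apply Finset.filter_congr
    intro j hj
    rw [hfl (j+1) (by simp at hj ⊢; omega)]

lemma floor_double (y : ℝ) : ⌊2*y⌋ = 2*⌊y⌋ ∨ ⌊2*y⌋ = 2*⌊y⌋ + 1 := by
  have h0 := Int.floor_le y
  have h1 := Int.lt_floor_add_one y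
  have h2 : 2*⌊y⌋ ≤ ⌊2*y⌋ := by
    apply Int.le_floor.2; push_cast; linarith
  have h3 : ⌊2*y⌋ < 2*⌊y⌋ + 2 := by
    apply Int.floor_lt.2; push_cast; linarith
  omega

lemma infinitely_many_ones {x : ℝ} (hx : Irrational x) (J : ℕ) :
    ∃ j, J ≤ j ∧ Odd ⌊(2:ℝ)^(j+1) * x⌋ := by
  by_contra h
  push_neg at h
  have key : ∀ t : ℕ, ⌊(2:ℝ)^(J+t) * x⌋ = 2^t * ⌊(2:ℝ)^J * x⌋ := by
    intro t
    induction t with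
    | zero => simp
    | succ t ih =>
      have heven : ¬ Odd ⌊(2:ℝ)^(J+t+1) * x⌋ := h (J+t) (by omega)
      have hsp : (2:ℝ)^(J+t+1) * x = 2 * ((2:ℝ)^(J+t) * x) := by ring
      rcases floor_double ((2:ℝ)^(J+t) * x) with hd | hd
      · have : (J + (t+1)) = (J + t) + 1 := by omega
        rw [this, hsp, hd, ih]; ring
      · exfalso
        apply heven
        rw [show (J+t+1) = (J+t)+1 from rfl, hsp, hd]
        exact ⟨⌊(2:ℝ)^(J+t) * x⌋, by ring⟩
  set z := (2:ℝ)^J * x with hz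
  have hzirr : Irrational z := irr_two_pow_mul hx J
  have hbound : ∀ t : ℕ, z - ⌊z⌋ < (1/2)^t := by
    intro t
    have h1 : (2:ℝ)^(J+t) * x < ((2^t * ⌊z⌋ : ℤ) : ℝ) + 1 := by
      rw [← key t]; exact Int.lt_floor_add_one _
    have h2 : (2:ℝ)^(J+t) * x = 2^t * z := by rw [hz, pow_add]; ring
    push_cast at h1
    rw [h2] at h1
    have hp : (0:ℝ) < 2^t := by positivity
    rw [div_pow, one_pow]
    rw [lt_div_iff₀ hp]
    linarith
  have : z ≤ (⌊z⌋ : ℝ) := by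
    by_contra hlt
    push_neg at hlt
    obtain ⟨t, ht⟩ := exists_pow_lt_of_lt_one (show (0:ℝ) < z - ⌊z⌋ by linarith)
      (show (1/2:ℝ) < 1 by norm_num)
    exact absurd (hbound t) (not_lt.2 (le_of_lt ht))
  exact absurd (le_antisymm this (Int.floor_le z)) (fun h' => hzirr.ne_int ⌊z⌋ h')

lemma cover_exists {x : ℝ} (hx : Irrational x) : ∀ n : ℕ, ∃ k, n + 1 ≤ cnt k x := by
  intro n
  induction n with
  | zero =>
    obtain ⟨j, -, hodd⟩ := infinitely_many_ones hx 0
    refine ⟨j, ?_⟩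
    have : j ∈ (Finset.range (j+1)).filter (fun j => Odd ⌊(2:ℝ)^(j+1) * x⌋) :=
      Finset.mem_filter.2 ⟨Finset.mem_range.2 (by omega), hodd⟩
    exact Finset.card_pos.2 ⟨j, this⟩
  | succ n ih =>
    obtain ⟨k, hk⟩ := ih
    obtain ⟨j, hj, hodd⟩ := infinitely_many_ones hx (k+1)
    refine ⟨j, ?_⟩
    have hss : (Finset.range (k+1)).filter (fun j => Odd ⌊(2:ℝ)^(j+1) * x⌋) ⊂
        (Finset.range (j+1)).filter (fun j => Odd ⌊(2:ℝ)^(j+1) * x⌋) := by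
      constructor
      · exact Finset.filter_subset_filter _ (Finset.range_subset_range.2 (by omega))
      · intro hsub
        have : j ∈ (Finset.range (j+1)).filter (fun j => Odd ⌊(2:ℝ)^(j+1) * x⌋) :=
          Finset.mem_filter.2 ⟨Finset.mem_range.2 (by omega), hodd⟩
        have := Finset.mem_range.1 (Finset.mem_filter.1 (hsub this)).1
        omega
    have := Finset.card_lt_card hss
    unfold cnt at hk ⊢
    omega

lemma two_pow_mul_half_pow {a b : ℕ} (h : b ≤ a) :
    (2:ℝ)^a * (1/2)^b = (2:ℝ)^(a - b) := by
  have : a = (a - b) + b := by omega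
  rw [this, pow_add, Nat.add_sub_cancel, mul_assoc, ← mul_pow]
  norm_num

lemma half_pow_mul_two_pow {a b : ℕ} (h : a ≤ b) :
    (2:ℝ)^a * (1/2)^b = ((1:ℝ)/2)^(b - a) := by
  have : b = a + (b - a) := by omega
  rw [this, pow_add, Nat.add_sub_cancel_left, ← mul_assoc, ← mul_pow]
  norm_num

/-- sparse digit positions dominating `K` -/
def qseq (K : ℕ → ℕ) : ℕ → ℕ
  | 0 => K 0 + 1
  | n+1 => max (K (n+1)) (2 * qseq K n) + 2

lemma qseq_gt (K : ℕ → ℕ) (n : ℕ) : K n < qseq K n := by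
  cases n with
  | zero => show K 0 < K 0 + 1; omega
  | succ n =>
    show K (n+1) < max (K (n+1)) (2 * qseq K n) + 2
    have := le_max_left (K (n+1)) (2 * qseq K n)
    omega

lemma qseq_step (K : ℕ → ℕ) (n : ℕ) : 2 * qseq K n + 2 ≤ qseq K (n+1) := by
  show 2 * qseq K n + 2 ≤ max (K (n+1)) (2 * qseq K n) + 2
  have := le_max_right (K (n+1)) (2 * qseq K n)
  omega

lemma qseq_mono (K : ℕ → ℕ) : StrictMono (qseq K) :=
  strictMono_nat_of_lt_succ (fun n => by have := qseq_step K n; omega)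

lemma qseq_le_self (K : ℕ → ℕ) (n : ℕ) : n ≤ qseq K n := (qseq_mono K).le_apply

lemma qseq_gap (K : ℕ → ℕ) (m i : ℕ) : qseq K m + 2*i ≤ qseq K (i + m) := by
  induction i with
  | zero => simp
  | succ i ih =>
    have h1 := qseq_step K (i + m)
    have h2 : (i+1) + m = (i+m) + 1 := by omega
    rw [h2]
    omega

lemma qseq_exists (K : ℕ → ℕ) (j : ℕ) : ∃ m, j ≤ qseq K m := ⟨j, qseq_le_self K j⟩

/-- number of positions below `j` -/
noncomputable def Mfun (K : ℕ → ℕ) (j : ℕ) : ℕ := Nat.find (qseq_exists K j)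

lemma Mfun_spec (K : ℕ → ℕ) (j : ℕ) : j ≤ qseq K (Mfun K j) := Nat.find_spec (qseq_exists K j)

lemma Mfun_lt (K : ℕ → ℕ) {j m : ℕ} (h : m < Mfun K j) : qseq K m < j := by
  have := Nat.find_min (qseq_exists K j) h
  omega

lemma Mfun_gt (K : ℕ → ℕ) {j m : ℕ} (h : qseq K m < j) : m < Mfun K j := by
  by_contra h'
  push_neg at h'
  have := (qseq_mono K).monotone h'
  have := Mfun_spec K j
  omega

noncomputable def Nfun (K : ℕ → ℕ) (j : ℕ) : ℤ :=
  ∑ i ∈ Finset.range (Mfun K j), 2^(j - (qseq K i + 1))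

lemma escape_exists (K : ℕ → ℕ) : ∃ x : ℝ, Irrational x ∧ ∀ n, cnt (K n) x ≤ n := by
  set f : ℕ → ℝ := fun n => (1/2:ℝ)^(qseq K n + 1) with hf
  have hfpos : ∀ n, 0 < f n := fun n => by rw [hf]; positivity
  have hgeo : Summable (fun n : ℕ => ((1:ℝ)/2)^n * (1/2)) :=
    (summable_geometric_of_lt_one (by norm_num) (by norm_num)).mul_right _
  have hsum : Summable f := by
    apply Summable.of_nonneg_of_le (fun n => le_of_lt (hfpos n)) _ hgeo
    intro n
    show (1/2:ℝ)^(qseq K n + 1) ≤ (1/2)^n * (1/2)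
    rw [← pow_succ]
    exact pow_le_pow_of_le_one (by norm_num) (by norm_num)
      (by have := qseq_le_self K n; omega)
  set x := ∑' n, f n with hxdef
  -- the key decomposition
  have KEY : ∀ j : ℕ, ∃ ε : ℝ, (2:ℝ)^j * x = Nfun K j + ε ∧ 0 < ε ∧
      ε ≤ 4/3 * ((2:ℝ)^j * (1/2)^(qseq K (Mfun K j) + 1)) := by
    intro j
    have hsplit : x = ∑ i ∈ Finset.range (Mfun K j), f i + ∑' i, f (i + Mfun K j) :=
      (Summable.sum_add_tsum_nat_add (Mfun K j) hsum).symm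
    have htail_sum : Summable (fun i => f (i + Mfun K j)) := (summable_nat_add_iff (Mfun K j)).2 hsum
    refine ⟨(2:ℝ)^j * ∑' i, f (i + Mfun K j), ?_, ?_, ?_⟩
    · rw [hsplit, mul_add]
      congr 1
      have hcast : ((Nfun K j : ℤ) : ℝ) = ∑ i ∈ Finset.range (Mfun K j), ((2:ℝ)^(j - (qseq K i + 1))) := by
        unfold Nfun
        push_cast
        rfl
      rw [hcast, Finset.mul_sum]
      apply Finset.sum_congr rfl
      intro i hi
      have hqi : qseq K i + 1 ≤ j := by
        have := Mfun_lt K (Finset.mem_range.1 hi)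
        omega
      rw [hf]
      exact two_pow_mul_half_pow hqi
    · have : 0 < ∑' i, f (i + Mfun K j) :=
        Summable.tsum_pos htail_sum (fun i => le_of_lt (hfpos _)) 0 (hfpos _)
      positivity
    · have hterm : ∀ i : ℕ, f (i + Mfun K j) ≤ (1/2:ℝ)^(qseq K (Mfun K j) + 1) * (1/4)^i := by
        intro i
        have h1 : qseq K (Mfun K j) + 2*i + 1 ≤ qseq K (i + Mfun K j) + 1 := by
          have := qseq_gap K (Mfun K j) i; omega
        have h2 : (1/2:ℝ)^(qseq K (i + Mfun K j) + 1) ≤ (1/2)^(qseq K (Mfun K j) + 2*i + 1) :=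
          pow_le_pow_of_le_one (by norm_num) (by norm_num) h1
        calc f (i + Mfun K j) ≤ (1/2:ℝ)^(qseq K (Mfun K j) + 2*i + 1) := h2
          _ = (1/2:ℝ)^(qseq K (Mfun K j) + 1) * (1/4)^i := by
              rw [show qseq K (Mfun K j) + 2*i + 1 = (qseq K (Mfun K j) + 1) + 2*i by omega, pow_add, pow_mul]
              norm_num
      have hgeo4 : Summable (fun i : ℕ => (1/2:ℝ)^(qseq K (Mfun K j) + 1) * (1/4)^i) :=
        (summable_geometric_of_lt_one (by norm_num) (by norm_num)).mul_left _
      have htail_le : ∑' i, f (i + Mfun K j) ≤ (1/2:ℝ)^(qseq K (Mfun K j) + 1) * (4/3) := by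
        have := Summable.tsum_le_tsum hterm htail_sum hgeo4
        rwa [tsum_mul_left, tsum_geometric_of_lt_one (by norm_num : (0:ℝ) ≤ 1/4)
          (by norm_num), show ((1:ℝ) - 1/4)⁻¹ = 4/3 by norm_num] at this
      calc (2:ℝ)^j * ∑' i, f (i + Mfun K j) ≤ (2:ℝ)^j * ((1/2:ℝ)^(qseq K (Mfun K j) + 1) * (4/3)) :=
            mul_le_mul_of_nonneg_left htail_le (by positivity)
        _ = 4/3 * ((2:ℝ)^j * (1/2)^(qseq K (Mfun K j) + 1)) := by ring
  -- floors
  have FLOOR : ∀ j, ⌊(2:ℝ)^j * x⌋ = Nfun K j := by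
    intro j
    obtain ⟨ε, heq, hpos, hbd⟩ := KEY j
    have hsmall : (2:ℝ)^j * (1/2)^(qseq K (Mfun K j) + 1) ≤ 1/2 := by
      have h1 : (1/2:ℝ)^(qseq K (Mfun K j) + 1) ≤ (1/2)^(j+1) :=
        pow_le_pow_of_le_one (by norm_num) (by norm_num)
          (by have := Mfun_spec K j; omega)
      have h2 : (2:ℝ)^j * (1/2)^(j+1) = 1/2 := by
        rw [half_pow_mul_two_pow (by omega : j ≤ j + 1)]
        simp
      calc (2:ℝ)^j * (1/2)^(qseq K (Mfun K j) + 1) ≤ (2:ℝ)^j * (1/2)^(j+1) :=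
            mul_le_mul_of_nonneg_left h1 (by positivity)
        _ = 1/2 := h2
    have hε1 : ε < 1 := by nlinarith
    rw [heq, Int.floor_eq_iff]
    constructor
    · linarith
    · linarith
  -- parity
  have PAR : ∀ j : ℕ, (Odd (Nfun K (j+1)) ↔ ∃ i, qseq K i = j) := by
    intro j
    constructor
    · intro hodd
      by_contra hcon
      push_neg at hcon
      have heven : Even (Nfun K (j+1)) := by
        unfold Nfun
        rw [even_iff_two_dvd]
        apply Finset.dvd_sum
        intro i hi
        have hqi : qseq K i < j + 1 := Mfun_lt K (Finset.mem_range.1 hi)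
        have hne : qseq K i ≠ j := hcon i
        exact dvd_pow_self (2:ℤ) (by omega)
      exact (Int.not_odd_iff_even.2 heven) hodd
    · rintro ⟨i, rfl⟩
      have hiM : i < Mfun K (qseq K i + 1) := Mfun_gt K (by omega)
      have hmem : i ∈ Finset.range (Mfun K (qseq K i + 1)) := Finset.mem_range.2 hiM
      have hsplit := Finset.sum_erase_add (Finset.range (Mfun K (qseq K i + 1)))
        (fun i' => (2:ℤ)^(qseq K i + 1 - (qseq K i' + 1))) hmem
      have heven : Even (∑ i' ∈ (Finset.range (Mfun K (qseq K i + 1))).erase i,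
          (2:ℤ)^(qseq K i + 1 - (qseq K i' + 1))) := by
        rw [even_iff_two_dvd]
        apply Finset.dvd_sum
        intro i' hi'
        have hne : i' ≠ i := Finset.ne_of_mem_erase hi'
        have hlt : qseq K i' < qseq K i + 1 :=
          Mfun_lt K (Finset.mem_range.1 (Finset.mem_of_mem_erase hi'))
        have hne2 : qseq K i' ≠ qseq K i := by
          intro hcon
          exact hne ((qseq_mono K).injective hcon)
        exact dvd_pow_self (2:ℤ) (by omega)
      have hterm : ((2:ℤ)^(qseq K i + 1 - (qseq K i + 1))) = 1 := by simp
      show Odd (Nfun K (qseq K i + 1))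
      have hval : Nfun K (qseq K i + 1) = (∑ i' ∈ (Finset.range (Mfun K (qseq K i + 1))).erase i,
          (2:ℤ)^(qseq K i + 1 - (qseq K i' + 1))) + 1 := by
        unfold Nfun
        rw [← hterm]
        exact hsplit.symm
      rw [hval]
      exact heven.add_one
  -- irrationality
  have hxirr : Irrational x := by
    rintro ⟨r, hr⟩
    have hb : 0 < r.den := r.pos
    set b : ℕ := r.den with hbdef
    obtain ⟨t, ht⟩ := exists_pow_lt_of_lt_one
      (show (0:ℝ) < 3/(4*b) by positivity) (show (1/2:ℝ) < 1 by norm_num)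
    have hMval : Mfun K (qseq K t + 1) = t + 1 := by
      apply le_antisymm
      · exact Nat.find_le (by have := qseq_step K t; omega)
      · exact Mfun_gt K (by omega)
    obtain ⟨ε, heq, hpos, hbd⟩ := KEY (qseq K t + 1)
    have hbd2 : ε ≤ 4/3 * (1/2:ℝ)^(t+2) := by
      have h1 : (2:ℝ)^(qseq K t + 1) * (1/2)^(qseq K (Mfun K (qseq K t + 1)) + 1) = (1/2)^(qseq K (t+1) - qseq K t) := by
        rw [hMval, half_pow_mul_two_pow
          (by have := qseq_step K t; omega : qseq K t + 1 ≤ qseq K (t+1) + 1)]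
        congr 1
        omega
      have h2 : (1/2:ℝ)^(qseq K (t+1) - qseq K t) ≤ (1/2)^(t+2) := by
        apply pow_le_pow_of_le_one (by norm_num) (by norm_num)
        have := qseq_step K t
        have := qseq_le_self K t
        omega
      calc ε ≤ 4/3 * ((2:ℝ)^(qseq K t + 1) * (1/2)^(qseq K (Mfun K (qseq K t + 1)) + 1)) := hbd
        _ = 4/3 * (1/2:ℝ)^(qseq K (t+1) - qseq K t) := by rw [h1]
        _ ≤ 4/3 * (1/2:ℝ)^(t+2) := by linarith
    have hbx : (b:ℝ) * x = (r.num : ℝ) := by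
      rw [← hr]
      have h0 := Rat.mul_den_eq_num r
      have h1 : ((r * (r.den:ℚ) : ℚ) : ℝ) = ((r.num : ℚ) : ℝ) := by rw [h0]
      push_cast at h1
      rw [hbdef]
      linarith
    set w : ℤ := 2^(qseq K t + 1) * r.num - (b:ℤ) * Nfun K (qseq K t + 1) with hwdef
    have hw : (w : ℝ) = b * ε := by
      rw [hwdef]
      push_cast
      have h2 : (2:ℝ)^(qseq K t + 1) * ((b:ℝ) * x) = (b:ℝ) * Nfun K (qseq K t + 1) + (b:ℝ) * ε := by
        have h3 : (b:ℝ) * ((2:ℝ)^(qseq K t + 1) * x) = (b:ℝ) * (Nfun K (qseq K t + 1) + ε) := by rw [heq]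
        rw [← mul_assoc, mul_comm ((2:ℝ)^(qseq K t + 1)) (b:ℝ), mul_assoc]
        linarith
      rw [hbx] at h2
      linarith
    have hb' : (0:ℝ) < b := by exact_mod_cast hb
    have hwpos : (0:ℝ) < w := by rw [hw]; positivity
    have hwlt : (w:ℝ) < 1 := by
      rw [hw]
      have h3 : (1/2:ℝ)^(t+2) = (1/2)^t * (1/4) := by rw [pow_add]; norm_num
      have h8 : (4/3:ℝ) * (1/2)^(t+2) ≤ (1/3) * (1/2)^t := by rw [h3]; linarith [pow_nonneg (show (0:ℝ) ≤ 1/2 by norm_num) t]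
      have h6 : (b:ℝ) * (3/(4*b)) = 3/4 := by field_simp
      have h5 : (b:ℝ) * ((1/2)^t) < 3/4 := by
        have := mul_lt_mul_of_pos_left ht hb'
        linarith [h6 ▸ this]
      calc (b:ℝ) * ε ≤ (b:ℝ) * (4/3 * (1/2:ℝ)^(t+2)) :=
            mul_le_mul_of_nonneg_left hbd2 hb'.le
        _ ≤ (b:ℝ) * ((1/3) * (1/2)^t) := mul_le_mul_of_nonneg_left h8 hb'.le
        _ = (1/3) * ((b:ℝ) * (1/2)^t) := by ring
        _ < (1/3) * (3/4) := by linarith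
        _ < 1 := by norm_num
    have h1 : 0 < w := by exact_mod_cast hwpos
    have h2 : w < 1 := by exact_mod_cast hwlt
    omega
  -- the count bound
  refine ⟨x, hxirr, ?_⟩
  intro n
  unfold cnt
  have hsub : (Finset.range (K n + 1)).filter (fun j => Odd ⌊(2:ℝ)^(j+1) * x⌋) ⊆
      (Finset.range n).image (qseq K) := by
    intro j hj
    obtain ⟨hjr, hodd⟩ := Finset.mem_filter.1 hj
    rw [FLOOR (j+1)] at hodd
    obtain ⟨i, hi⟩ := (PAR j).1 hodd
    have hjK : j < K n + 1 := Finset.mem_range.1 hjr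
    have hq0 : K n < qseq K n := qseq_gt K n
    have hlt : qseq K i < qseq K n := by omega
    have : i < n := ((qseq_mono K).lt_iff_lt).1 hlt
    exact Finset.mem_image.2 ⟨i, Finset.mem_range.2 this, hi⟩
  calc ((Finset.range (K n + 1)).filter (fun j => Odd ⌊(2:ℝ)^(j+1) * x⌋)).card
      ≤ ((Finset.range n).image (qseq K)).card := Finset.card_le_card hsub
    _ ≤ (Finset.range n).card := Finset.card_image_le
    _ = n := Finset.card_range n

lemma sfinAA_implies_menger {Z : Type*} [TopologicalSpace Z] (h : SfinAA Z) : Menger Z := by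
  intro U hU
  have hac : ∀ n, AlmostCover (U (n+1)) := by
    intro n
    refine ⟨(hU (n+1)).1, ?_⟩
    rw [(hU (n+1)).2, compl_univ]
    exact isCompact_empty
  obtain ⟨V', hV', hcomp⟩ := h (fun n => U (n+1)) hac
  have hcover : (⋃₀ ⋃ n, V' n)ᶜ ⊆ ⋃ s : U 0, (s : Set Z) := by
    intro z _
    have hz : z ∈ ⋃₀ U 0 := by rw [(hU 0).2]; trivial
    rcases hz with ⟨s, hs, hzs⟩
    exact mem_iUnion.2 ⟨⟨s, hs⟩, hzs⟩
  obtain ⟨t, ht⟩ := hcomp.elim_finite_subcover (fun s : U 0 => (s : Set Z))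
    (fun s => (hU 0).1 s s.2) hcover
  refine ⟨fun n => Nat.casesOn n (Subtype.val '' (t : Set (U 0))) V', ?_, ?_⟩
  · intro n
    cases n with
    | zero => exact ⟨Subtype.coe_image_subset _ _, t.finite_toSet.image _⟩
    | succ n => exact ⟨(hV' n).1, (hV' n).2⟩
  · apply eq_univ_of_forall
    intro z
    by_cases hz : z ∈ ⋃₀ ⋃ n, V' n
    · rcases hz with ⟨s, hs, hzs⟩
      rcases mem_iUnion.1 hs with ⟨n, hn⟩
      exact ⟨s, mem_iUnion.2 ⟨n+1, hn⟩, hzs⟩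
    · rcases mem_iUnion₂.1 (ht hz) with ⟨s, hst, hzs⟩
      exact ⟨s, mem_iUnion.2 ⟨0, ⟨s, hst, rfl⟩⟩, hzs⟩

lemma part1 : Menger ↥(StoneCechRemainder Irr) := by
  obtain ⟨O, hOopen, hOeq⟩ := range_cmap_gdelta
  set φ := stoneCechExtend cmap_emb.continuous with hφ
  have hrange : range (stoneCechUnit : ↥Irr → StoneCech ↥Irr) = ⋂ n, φ ⁻¹' O n := by
    rw [range_unit_eq_preimage cmap_emb, hOeq, preimage_iInter]
  apply menger_of_sigma (fun n => (φ ⁻¹' O n)ᶜ)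
  · intro n
    exact (((hOopen n).preimage
      (continuous_stoneCechExtend cmap_emb.continuous)).isClosed_compl).isCompact
  · intro n
    rw [StoneCechRemainder, hrange, compl_iInter]
    exact subset_iUnion (fun m => (φ ⁻¹' O m)ᶜ) n
  · rw [StoneCechRemainder, hrange, compl_iInter]

lemma not_menger_irr : ¬ Menger ↥Irr := by
  intro hM
  classical
  set X := ↥Irr with hX
  let A : ℕ → ℕ → Set X := fun n k => {x : X | n + 1 ≤ cnt k (x : ℝ)}
  have hAopen : ∀ n k, IsOpen (A n k) := by
    intro n k
    rw [isOpen_iff_forall_mem_open]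
    intro x hx
    obtain ⟨t, hto, hxt, hconst⟩ := cnt_locally_const k (x:ℝ) x.2
    refine ⟨Subtype.val ⁻¹' t, ?_, hto.preimage continuous_subtype_val, hxt⟩
    intro y hy
    show n + 1 ≤ cnt k (y:ℝ)
    rw [hconst _ hy]
    exact hx
  obtain ⟨V, hV, hVcov⟩ := hM (fun n => {s | ∃ k, s = A n k}) (by
    intro n
    constructor
    · rintro s ⟨k, rfl⟩; exact hAopen n k
    · apply eq_univ_of_forall
      intro x
      obtain ⟨k, hk⟩ := cover_exists x.2 n
      exact ⟨A n k, ⟨k, rfl⟩, hk⟩)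
  have hbound : ∀ n, ∃ K, ∀ s ∈ V n, s ⊆ A n K := by
    intro n
    have hfin := (hV n).2
    obtain ⟨g, hg⟩ : ∃ g : Set X → ℕ, ∀ s ∈ V n, s = A n (g s) := by
      refine ⟨fun s => if h : ∃ k, s = A n k then h.choose else 0, ?_⟩
      intro s hs
      have h : ∃ k, s = A n k := (hV n).1 hs
      dsimp only
      rw [dif_pos h]
      exact h.choose_spec
    refine ⟨hfin.toFinset.sup g, ?_⟩
    intro s hs
    rw [hg s hs]
    intro y hy
    exact le_trans hy (cnt_mono (Finset.le_sup ((Set.Finite.mem_toFinset hfin).2 hs)) _)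
  choose K hK using hbound
  obtain ⟨xr, hxirr, hxcnt⟩ := escape_exists K
  have hx : (⟨xr, hxirr⟩ : X) ∈ ⋃₀ ⋃ n, V n := by rw [hVcov]; trivial
  rcases hx with ⟨s, hs, hxs⟩
  rcases mem_iUnion.1 hs with ⟨n, hn⟩
  have h1 : n + 1 ≤ cnt (K n) xr := hK n s hn hxs
  have h2 := hxcnt n
  omega

theorem stmt19 :
    Menger ↥(StoneCechRemainder {x : ℝ | Irrational x}) ∧
      ¬ SfinAA {x : ℝ | Irrational x} := by
  exact ⟨part1, fun hS => not_menger_irr (sfinAA_implies_menger hS)⟩
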